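/- For m_0 ≤ m < t*, the probability of early stopping is bounded by P(R_m² ≤ κ) ≤ exp( −(E[R_m²]−κ)² / (16 δ⁴ (D−m)) ) + exp( −(E[R_m²]−κ)² / (32 δ² B²_{m,λ}(μ)) ). -/

import Mathlib

open MeasureTheory ProbabilityTheory Real Finset

/-- Residual at integer truncation level `m`: `R_m² = Σ_{i=m+1}^D Y_i²`. -/
noncomputable def residSq {Ω : Type*} (D : ℕ) (Y : ℕ → Ω → ℝ) (m : ℕ) (ω : Ω) : ℝ :=
  ∑ i ∈ Finset.Icc (m + 1) D, (Y i ω) ^ 2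

/-- Interpolated residual `R_t²`. -/
noncomputable def residSqT {Ω : Type*} (D : ℕ) (Y : ℕ → Ω → ℝ) (t : ℝ) (ω : Ω) : ℝ :=
  (1 - Real.sqrt (t - ⌊t⌋₊)) ^ 2 * (Y (⌊t⌋₊ + 1) ω) ^ 2
    + ∑ i ∈ Finset.Icc (⌊t⌋₊ + 2) D, (Y i ω) ^ 2


open Filter
open scoped NNReal ENNReal

section EarlyStoppingAux

lemma key_poly_bound (x : ℝ) : x^2 + 1 ≤ 4 * rexp (x^2/4) := by
  have h := Real.add_one_le_exp (x^2/4)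
  nlinarith [Real.exp_pos (x^2/4)]

lemma integrable_of_le_gauss {g : ℝ → ℝ} (hg : AEStronglyMeasurable g volume) (C : ℝ)
    (h : ∀ x, |g x| ≤ C * rexp (-(x^2/4))) : Integrable g volume := by
  refine Integrable.mono ((integrable_exp_neg_mul_sq (show (0:ℝ) < 1/4 by norm_num)).const_mul C) hg
    (ae_of_all _ fun x => ?_)
  have h2 : -(1/4 : ℝ) * x^2 = -(x^2/4) := by ring
  have h3 := h x
  have h4 : (0:ℝ) ≤ C * rexp (-(x^2/4)) := le_trans (abs_nonneg _) h3
  simp only [norm_eq_abs, h2]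
  calc |g x| ≤ C * rexp (-(x^2/4)) := h3
    _ ≤ |C * rexp (-(x^2/4))| := le_abs_self _

lemma integrable_x_gauss : Integrable (fun x : ℝ => x * rexp (-(x^2/2))) volume := by
  refine integrable_of_le_gauss (by apply Continuous.aestronglyMeasurable; continuity) 4 fun x => ?_
  have h1 : |x * rexp (-(x^2/2))| = |x| * rexp (-(x^2/2)) := by
    rw [abs_mul, abs_of_pos (Real.exp_pos _)]
  rw [h1]
  have h2 : |x| ≤ 4 * rexp (x^2/4) := by
    nlinarith [key_poly_bound x, sq_abs x, abs_nonneg x, sq_nonneg (|x| - 1), Real.exp_pos (x^2/4)]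
  calc |x| * rexp (-(x^2/2)) ≤ (4 * rexp (x^2/4)) * rexp (-(x^2/2)) := by
        exact mul_le_mul_of_nonneg_right h2 (Real.exp_pos _).le
    _ = 4 * rexp (-(x^2/4)) := by rw [mul_assoc, ← Real.exp_add]; ring_nf

lemma integrable_sq_gauss : Integrable (fun x : ℝ => x^2 * rexp (-(x^2/2))) volume := by
  refine integrable_of_le_gauss (by apply Continuous.aestronglyMeasurable; continuity) 4 fun x => ?_
  have h1 : |x^2 * rexp (-(x^2/2))| = x^2 * rexp (-(x^2/2)) := by
    rw [abs_of_nonneg]; positivity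
  rw [h1]
  have h2 : x^2 ≤ 4 * rexp (x^2/4) := by nlinarith [key_poly_bound x]
  calc x^2 * rexp (-(x^2/2)) ≤ (4 * rexp (x^2/4)) * rexp (-(x^2/2)) := by
        exact mul_le_mul_of_nonneg_right h2 (Real.exp_pos _).le
    _ = 4 * rexp (-(x^2/4)) := by rw [mul_assoc, ← Real.exp_add]; ring_nf

lemma integrable_exp_gauss : Integrable (fun x : ℝ => rexp (-(x^2/2))) volume := by
  have := integrable_exp_neg_mul_sq (show (0:ℝ) < 1/2 by norm_num)
  convert this using 2 with x
  ring_nf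

lemma tendsto_x_gauss_atTop : Tendsto (fun x : ℝ => x * rexp (-(x^2/2))) atTop (nhds 0) := by
  have h := rpow_mul_exp_neg_mul_sq_isLittleO_exp_neg (show (0:ℝ) < 1/2 by norm_num) 1
  have h2 : (fun x : ℝ => x * rexp (-(x^2/2))) =o[atTop] fun x => rexp (-(1/2) * x) := by
    refine h.congr' ?_ (by rfl)
    filter_upwards [] with x
    rw [Real.rpow_one]
    ring_nf
  refine h2.trans_tendsto ?_
  have : Tendsto (fun x : ℝ => -(1/2) * x) atTop atBot := by
    exact (tendsto_const_mul_atBot_of_neg (by norm_num)).mpr tendsto_id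
  exact tendsto_exp_atBot.comp this

lemma tendsto_exp_gauss_atTop : Tendsto (fun x : ℝ => rexp (-(x^2/2))) atTop (nhds 0) := by
  refine tendsto_exp_atBot.comp ?_
  have h1 : Tendsto (fun x : ℝ => x^2/2) atTop atTop :=
    (tendsto_pow_atTop (two_ne_zero)).atTop_div_const (by norm_num)
  exact tendsto_neg_atTop_atBot.comp h1



lemma tendsto_atBot_of_neg {f : ℝ → ℝ} {l : Filter ℝ} (h : Tendsto (fun x => f (-x)) atTop l) :
    Tendsto f atBot l := by
  have h2 := h.comp tendsto_neg_atBot_atTop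
  refine h2.congr fun x => by simp [Function.comp]

lemma hasDerivAt_exp_gauss (x : ℝ) :
    HasDerivAt (fun y : ℝ => -rexp (-(y^2/2))) (x * rexp (-(x^2/2))) x := by
  have h1 : HasDerivAt (fun y : ℝ => -(y^2/2)) (-x) x := by
    have := ((hasDerivAt_pow 2 x).div_const 2).neg
    simpa [Pi.neg_def] using this
  have h2 := (h1.exp).neg
  refine HasDerivAt.congr_deriv h2 ?_
  ring

lemma hasDerivAt_x_gauss (x : ℝ) :
    HasDerivAt (fun y : ℝ => -(y * rexp (-(y^2/2)))) ((x^2 - 1) * rexp (-(x^2/2))) x := by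
  have h1 : HasDerivAt (fun y : ℝ => -(y^2/2)) (-x) x := by
    have := ((hasDerivAt_pow 2 x).div_const 2).neg
    simpa [Pi.neg_def] using this
  have h2 := ((hasDerivAt_id x).mul h1.exp).neg
  refine HasDerivAt.congr_deriv h2 ?_
  simp only [id]
  ring

lemma integral_x_gauss : ∫ x : ℝ, x * rexp (-(x^2/2)) = 0 := by
  have hIoi : ∫ x in Set.Ioi (0:ℝ), x * rexp (-(x^2/2)) = 0 - (-rexp (-((0:ℝ)^2/2))) := by
    refine integral_Ioi_of_hasDerivAt_of_tendsto
      (Continuous.continuousWithinAt (by continuity))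
      (fun x _ => hasDerivAt_exp_gauss x) integrable_x_gauss.integrableOn ?_
    simpa using tendsto_exp_gauss_atTop.neg
  have hIic : ∫ x in Set.Iic (0:ℝ), x * rexp (-(x^2/2)) = (-rexp (-((0:ℝ)^2/2))) - 0 := by
    refine integral_Iic_of_hasDerivAt_of_tendsto
      (Continuous.continuousWithinAt (by continuity))
      (fun x _ => hasDerivAt_exp_gauss x) integrable_x_gauss.integrableOn ?_
    refine tendsto_atBot_of_neg ?_
    simpa using tendsto_exp_gauss_atTop.neg
  have := integral_add_compl (measurableSet_Iic (a := (0:ℝ))) integrable_x_gauss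
  rw [Set.compl_Iic] at this
  rw [← this, hIoi, hIic]
  ring

lemma integral_sq_gauss : ∫ x : ℝ, x^2 * rexp (-(x^2/2)) = Real.sqrt (2*π) := by
  have key : ∫ x : ℝ, (x^2 - 1) * rexp (-(x^2/2)) = 0 := by
    have hint : Integrable (fun x : ℝ => (x^2 - 1) * rexp (-(x^2/2))) volume := by
      have := integrable_sq_gauss.sub integrable_exp_gauss
      refine this.congr (ae_of_all _ fun x => by simp [Pi.sub_apply]; ring)
    have hIoi : ∫ x in Set.Ioi (0:ℝ), (x^2 - 1) * rexp (-(x^2/2))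
        = 0 - (-((0:ℝ) * rexp (-((0:ℝ)^2/2)))) := by
      refine integral_Ioi_of_hasDerivAt_of_tendsto
        (Continuous.continuousWithinAt (by continuity))
        (fun x _ => hasDerivAt_x_gauss x) hint.integrableOn ?_
      simpa using tendsto_x_gauss_atTop.neg
    have hIic : ∫ x in Set.Iic (0:ℝ), (x^2 - 1) * rexp (-(x^2/2))
        = (-((0:ℝ) * rexp (-((0:ℝ)^2/2)))) - 0 := by
      refine integral_Iic_of_hasDerivAt_of_tendsto
        (Continuous.continuousWithinAt (by continuity))
        (fun x _ => hasDerivAt_x_gauss x) hint.integrableOn ?_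
      refine tendsto_atBot_of_neg ?_
      have : Tendsto (fun x : ℝ => -(-x * rexp (-((-x)^2/2)))) atTop (nhds 0) := by
        have h2 : (fun x : ℝ => -(-x * rexp (-((-x)^2/2)))) = fun x : ℝ => x * rexp (-(x^2/2)) := by
          funext x; ring_nf
        rw [h2]; exact tendsto_x_gauss_atTop
      exact this
    have := integral_add_compl (measurableSet_Iic (a := (0:ℝ))) hint
    rw [Set.compl_Iic] at this
    rw [← this, hIoi, hIic]
    ring
  have hsplit : ∫ x : ℝ, (x^2 - 1) * rexp (-(x^2/2))
      = (∫ x : ℝ, x^2 * rexp (-(x^2/2))) - ∫ x : ℝ, rexp (-(x^2/2)) := by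
    rw [← integral_sub integrable_sq_gauss integrable_exp_gauss]
    congr 1; funext x; ring
  have hexp : ∫ x : ℝ, rexp (-(x^2/2)) = Real.sqrt (2*π) := by
    have := integral_gaussian (1/2)
    have h2 : (fun x : ℝ => rexp (-(1/2) * x^2)) = fun x : ℝ => rexp (-(x^2/2)) := by
      funext x; ring_nf
    rw [h2] at this
    rw [this]
    rw [show π / (1/2) = 2 * π by ring]
  rw [hsplit] at key
  linarith [key, hexp]


-- integral over gaussianReal 0 1 as weighted Lebesgue integral
lemma integral_gaussianReal_eq (g : ℝ → ℝ) :
    ∫ x, g x ∂(gaussianReal 0 1) = ∫ x, gaussianPDFReal 0 1 x * g x := by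
  rw [gaussianReal_of_var_ne_zero 0 one_ne_zero, gaussianPDF_def]
  have h : (fun x => ENNReal.ofReal (gaussianPDFReal 0 1 x))
      = fun x => ((Real.toNNReal (gaussianPDFReal 0 1 x) : ℝ≥0) : ℝ≥0∞) := rfl
  rw [h, integral_withDensity_eq_integral_smul ((measurable_gaussianPDFReal 0 1).real_toNNReal) g]
  congr 1
  funext x
  rw [NNReal.smul_def, smul_eq_mul, Real.coe_toNNReal _ (gaussianPDFReal_nonneg 0 1 x)]

lemma integrable_gaussianReal_iff (g : ℝ → ℝ) :
    Integrable g (gaussianReal 0 1) ↔ Integrable (fun x => gaussianPDFReal 0 1 x * g x) volume := by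
  rw [gaussianReal_of_var_ne_zero 0 one_ne_zero, gaussianPDF_def]
  have h : (fun x => ENNReal.ofReal (gaussianPDFReal 0 1 x))
      = fun x => ((Real.toNNReal (gaussianPDFReal 0 1 x) : ℝ≥0) : ℝ≥0∞) := rfl
  rw [h, integrable_withDensity_iff_integrable_smul ((measurable_gaussianPDFReal 0 1).real_toNNReal)]
  constructor <;> intro hh <;> refine hh.congr (ae_of_all _ fun x => ?_) <;> simp only [] <;>
    rw [NNReal.smul_def, smul_eq_mul, Real.coe_toNNReal _ (gaussianPDFReal_nonneg 0 1 x)]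

lemma gaussianPDFReal_zero_one (x : ℝ) :
    gaussianPDFReal 0 1 x = (Real.sqrt (2*π))⁻¹ * rexp (-(x^2/2)) := by
  simp only [gaussianPDFReal, NNReal.coe_one, mul_one, sub_zero]
  congr 1
  ring

lemma sqrt_two_pi_pos : 0 < Real.sqrt (2*π) := Real.sqrt_pos.mpr (by positivity)





-- pdf completing-the-square identities
lemma pdf_mul_exp_lin (s x : ℝ) :
    gaussianPDFReal 0 1 x * rexp (s * x) = rexp (s^2/2) * gaussianPDFReal s 1 x := by
  simp only [gaussianPDFReal, NNReal.coe_one, mul_one, sub_zero]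
  rw [mul_assoc, ← Real.exp_add, mul_comm (rexp (s^2/2)), mul_assoc, ← Real.exp_add]
  congr 1
  ring

lemma pdf_mul_exp_sq {t : ℝ} (ht : 0 ≤ t) (x : ℝ) :
    gaussianPDFReal 0 1 x * rexp (-(t * x^2))
      = (Real.sqrt (1 + 2*t))⁻¹ * gaussianPDFReal 0 ⟨(1+2*t)⁻¹, by positivity⟩ x := by
  have h1 : (0:ℝ) < 1 + 2*t := by linarith
  simp only [gaussianPDFReal, NNReal.coe_one, NNReal.coe_mk, mul_one, sub_zero]
  erw [NNReal.coe_mk]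
  rw [mul_assoc, ← Real.exp_add]
  have hsq : Real.sqrt (2 * π * (1+2*t)⁻¹) = Real.sqrt (2*π) * (Real.sqrt (1+2*t))⁻¹ := by
    rw [Real.sqrt_mul (by positivity), Real.sqrt_inv]
  have hexp : -x^2/(2*((1+2*t)⁻¹)) = -x^2/2 + -(t*x^2) := by
    field_simp
    ring
  rw [hsq, mul_inv, inv_inv, hexp]
  have hs0 : Real.sqrt (1+2*t) ≠ 0 := by positivity
  have hp0 : Real.sqrt (2*π) ≠ 0 := by positivity
  field_simp

lemma integral_exp_lin_gaussianReal (s : ℝ) :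
    ∫ x, rexp (s * x) ∂(gaussianReal 0 1) = rexp (s^2/2) := by
  rw [integral_gaussianReal_eq]
  simp_rw [pdf_mul_exp_lin]
  rw [integral_const_mul, integral_gaussianPDFReal_eq_one s one_ne_zero, mul_one]

lemma integrable_exp_lin_gaussianReal (s : ℝ) :
    Integrable (fun x => rexp (s * x)) (gaussianReal 0 1) := by
  rw [integrable_gaussianReal_iff]
  simp_rw [pdf_mul_exp_lin]
  exact (integrable_gaussianPDFReal s 1).const_mul _

lemma integral_exp_sq_gaussianReal {t : ℝ} (ht : 0 ≤ t) :
    ∫ x, rexp (-(t * x^2)) ∂(gaussianReal 0 1) = (Real.sqrt (1 + 2*t))⁻¹ := by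
  rw [integral_gaussianReal_eq]
  simp_rw [pdf_mul_exp_sq ht]
  rw [integral_const_mul]
  erw [integral_gaussianPDFReal_eq_one _ (ne_of_gt
    (NNReal.coe_pos.mp (show (0:ℝ) < ((⟨(1+2*t)⁻¹, by positivity⟩ : ℝ≥0) : ℝ) by
      exact (show (0:ℝ) < (1+2*t)⁻¹ by positivity)))), mul_one]

lemma integrable_exp_sq_gaussianReal {t : ℝ} (ht : 0 ≤ t) :
    Integrable (fun x => rexp (-(t * x^2))) (gaussianReal 0 1) := by
  rw [integrable_gaussianReal_iff]
  simp_rw [pdf_mul_exp_sq ht]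
  exact (integrable_gaussianPDFReal _ _).const_mul _

lemma integral_id_gaussianReal : ∫ x, x ∂(gaussianReal 0 1) = 0 := by
  rw [integral_gaussianReal_eq]
  simp_rw [gaussianPDFReal_zero_one]
  have h : ∀ x : ℝ, (Real.sqrt (2*π))⁻¹ * rexp (-(x^2/2)) * x
      = (Real.sqrt (2*π))⁻¹ * (x * rexp (-(x^2/2))) := fun x => by ring
  simp_rw [h]
  rw [integral_const_mul, integral_x_gauss, mul_zero]

lemma integrable_id_gaussianReal : Integrable (fun x : ℝ => x) (gaussianReal 0 1) := by
  rw [integrable_gaussianReal_iff]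
  have h : ∀ x : ℝ, (Real.sqrt (2*π))⁻¹ * (x * rexp (-(x^2/2)))
      = gaussianPDFReal 0 1 x * x := fun x => by rw [gaussianPDFReal_zero_one]; ring
  refine (integrable_x_gauss.const_mul (Real.sqrt (2*π))⁻¹).congr (ae_of_all _ fun x => h x)

lemma integral_sq_gaussianReal : ∫ x, x^2 ∂(gaussianReal 0 1) = 1 := by
  rw [integral_gaussianReal_eq]
  simp_rw [gaussianPDFReal_zero_one]
  have h : ∀ x : ℝ, (Real.sqrt (2*π))⁻¹ * rexp (-(x^2/2)) * x^2
      = (Real.sqrt (2*π))⁻¹ * (x^2 * rexp (-(x^2/2))) := fun x => by ring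
  simp_rw [h]
  rw [integral_const_mul, integral_sq_gauss, inv_mul_cancel₀ sqrt_two_pi_pos.ne']

lemma integrable_sq_gaussianReal : Integrable (fun x : ℝ => x^2) (gaussianReal 0 1) := by
  rw [integrable_gaussianReal_iff]
  have h : ∀ x : ℝ, (Real.sqrt (2*π))⁻¹ * (x^2 * rexp (-(x^2/2)))
      = gaussianPDFReal 0 1 x * x^2 := fun x => by rw [gaussianPDFReal_zero_one]; ring
  refine (integrable_sq_gauss.const_mul (Real.sqrt (2*π))⁻¹).congr (ae_of_all _ fun x => h x)


lemma exp_sub_half_sq_le (u : ℝ) (hu : 0 ≤ u) : rexp (u - u^2/2) ≤ 1 + u := by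
  have hlog : u - u^2/2 ≤ Real.log (1 + u) := by
    set g : ℝ → ℝ := fun v => Real.log (1 + v) - v + v^2/2 with hg
    have hderiv : ∀ v ∈ Set.Ioi (0:ℝ), HasDerivAt g ((1+v)⁻¹ - 1 + v) v := by
      intro v hv
      have h1v : (0:ℝ) < 1 + v := by simp at hv; linarith
      have h1 : HasDerivAt (fun w : ℝ => 1 + w) 1 v := by
        simpa using (hasDerivAt_id v).const_add 1
      have h2 : HasDerivAt (fun w : ℝ => Real.log (1 + w)) ((1+v)⁻¹) v := by
        simpa using (h1.log h1v.ne')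
      have h3 : HasDerivAt (fun w : ℝ => w^2/2) v v := by
        simpa using (hasDerivAt_pow 2 v).div_const 2
      exact (h2.sub (hasDerivAt_id v)).add h3
    have hcont : ContinuousOn g (Set.Ici (0:ℝ)) := by
      refine ContinuousOn.add (ContinuousOn.sub ?_ continuousOn_id) (by fun_prop)
      refine ContinuousOn.log (by fun_prop) fun v hv => ?_
      simp only [Set.mem_Ici] at hv; positivity
    have hmono : MonotoneOn g (Set.Ici (0:ℝ)) := by
      refine monotoneOn_of_deriv_nonneg (convex_Ici 0) hcont ?_ ?_
      · intro v hv
        rw [interior_Ici] at hv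
        exact ((hderiv v hv).differentiableAt).differentiableWithinAt
      · intro v hv
        rw [interior_Ici] at hv
        rw [(hderiv v hv).deriv]
        have h1v : (0:ℝ) < 1 + v := by simp at hv; linarith
        have heq : (1+v)⁻¹ - 1 + v = v^2 / (1+v) := by field_simp; ring
        rw [heq]
        positivity
    have h0 : g 0 = 0 := by simp [hg]
    have := hmono (Set.self_mem_Ici) (Set.mem_Ici.mpr hu) hu
    rw [h0] at this
    simp only [hg] at this
    linarith
  calc rexp (u - u^2/2) ≤ rexp (Real.log (1+u)) := Real.exp_le_exp.mpr hlog
    _ = 1 + u := Real.exp_log (by linarith)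

lemma chi_mgf_bound {s : ℝ} (hs : 0 ≤ s) :
    rexp s * (Real.sqrt (1 + 2*s))⁻¹ ≤ rexp (s^2) := by
  have h1 : (0:ℝ) < 1 + 2*s := by linarith
  have h2 : rexp (s - s^2) ≤ Real.sqrt (1 + 2*s) := by
    refine (Real.le_sqrt' (Real.exp_pos _)).mpr ?_
    have h3 := exp_sub_half_sq_le (2*s) (by linarith)
    calc rexp (s - s^2) ^ 2 = rexp (2*s - (2*s)^2/2) := by
          rw [← Real.exp_nat_mul]; ring_nf
      _ ≤ 1 + 2*s := h3
  have h4 : (Real.sqrt (1 + 2*s))⁻¹ ≤ (rexp (s - s^2))⁻¹ := by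
    exact inv_anti₀ (Real.exp_pos _) h2
  calc rexp s * (Real.sqrt (1 + 2*s))⁻¹ ≤ rexp s * (rexp (s - s^2))⁻¹ := by
        exact mul_le_mul_of_nonneg_left h4 (Real.exp_pos _).le
    _ = rexp (s^2) := by rw [← Real.exp_neg, ← Real.exp_add]; ring_nf

end EarlyStoppingAux

/-- exponential bound on the probability of early stopping:
for `m₀ ≤ m < t*`,
`P(R_m² ≤ κ) ≤ exp(−(E[R_m²]−κ)²/(16δ⁴(D−m))) + exp(−(E[R_m²]−κ)²/(32δ²B²_{m,λ}(μ)))`. -/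
theorem early_stopping_probability_bound
    {Ω : Type*} [MeasurableSpace Ω] (P : Measure Ω) [IsProbabilityMeasure P]
    (D m0 : ℕ) (lam μ : ℕ → ℝ) (δ κ : ℝ) (hδ : 0 < δ) (hκ : 0 < κ)
    (hμ0 : ∀ i, D < i → μ i = 0)
    (hlam_pos : ∀ i, 1 ≤ i → 0 < lam i)
    (ε : ℕ → Ω → ℝ) (hεmeas : ∀ i, Measurable (ε i))
    (hεindep : iIndepFun ε P)
    (hεgauss : ∀ i, Measure.map (ε i) P = gaussianReal 0 1)
    (Y : ℕ → Ω → ℝ) (hY : ∀ i ω, Y i ω = lam i * μ i + δ * ε i ω)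
    (tstar : ℝ)
    (htstar : tstar = sInf {t : ℝ | (m0 : ℝ) ≤ t
        ∧ ∫ ω, residSqT D Y t ω ∂P
            ≤ κ - 2 * (Real.sqrt (t - ⌊t⌋₊) - (t - ⌊t⌋₊)) * δ ^ 2})
    (hts1 : (m0 : ℝ) ≤ tstar) (hts2 : tstar ≤ D)
    (m : ℕ) (hm0m : m0 ≤ m) (hmt : (m : ℝ) < tstar) :
    (P {ω | residSq D Y m ω ≤ κ}).toReal
      ≤ Real.exp (-((∫ ω, residSq D Y m ω ∂P) - κ) ^ 2
            / (16 * δ ^ 4 * ((D : ℝ) - m)))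
        + Real.exp (-((∫ ω, residSq D Y m ω ∂P) - κ) ^ 2
            / (32 * δ ^ 2 * ∑ i ∈ Finset.Icc (m + 1) D, (lam i * μ i) ^ 2)) := by
  classical
  -- notation
  set γ := gaussianReal 0 1 with hγ
  set c : ℕ → ℝ := fun i => lam i * μ i with hc
  set I : Finset ℕ := Finset.Icc (m+1) D with hI
  have hmD : m < D := by exact_mod_cast lt_of_lt_of_le hmt hts2
  have hn : (0:ℝ) < (D:ℝ) - m := by
    have : (m:ℝ) < D := by exact_mod_cast hmD
    linarith
  set n : ℝ := (D:ℝ) - m with hnd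
  have hcard : (I.card : ℝ) = n := by
    rw [hI, Nat.card_Icc]
    rw [hnd]
    have : D + 1 - (m+1) = D - m := by omega
    rw [this, Nat.cast_sub hmD.le]
  -- transfer lemmas
  have htrans : ∀ (i:ℕ) (f : ℝ → ℝ), AEStronglyMeasurable f γ →
      ∫ ω, f (ε i ω) ∂P = ∫ x, f x ∂γ := by
    intro i f hf
    rw [← hεgauss i, integral_map (hεmeas i).aemeasurable (by rwa [hεgauss i])]
  have htransInt : ∀ (i:ℕ) (f : ℝ → ℝ), AEStronglyMeasurable f γ →
      Integrable f γ → Integrable (fun ω => f (ε i ω)) P := by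
    intro i f hf hfi
    exact (integrable_map_measure (by rwa [hεgauss i]) (hεmeas i).aemeasurable).mp
      (by rwa [← hεgauss i] at hfi)
  have hmean : ∀ i, ∫ ω, ε i ω ∂P = 0 := by
    intro i
    have h := htrans i (fun x => x) measurable_id.aestronglyMeasurable
    rw [h]
    exact _root_.integral_id_gaussianReal
  have hsqmean : ∀ i, ∫ ω, (ε i ω)^2 ∂P = 1 := by
    intro i
    have h := htrans i (fun x => x^2) (by fun_prop)
    rw [h]
    exact integral_sq_gaussianReal
  have hεint : ∀ i, Integrable (fun ω => ε i ω) P := fun i =>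
    htransInt i (fun x => x) measurable_id.aestronglyMeasurable integrable_id_gaussianReal
  have hεsqint : ∀ i, Integrable (fun ω => (ε i ω)^2) P := fun i =>
    htransInt i (fun x => x^2) (by fun_prop) integrable_sq_gaussianReal
  -- expectation of Y_i^2
  have hYexpand : ∀ i, (fun ω => (Y i ω)^2)
      = fun ω => (c i)^2 + (2*(c i)*δ) * ε i ω + δ^2 * (ε i ω)^2 := by
    intro i; funext ω; rw [hY]; simp only [hc]; ring
  have hYint : ∀ i, Integrable (fun ω => (Y i ω)^2) P := by
    intro i
    rw [hYexpand i]
    exact ((integrable_const _).add ((hεint i).const_mul _)).add ((hεsqint i).const_mul _)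
  have hEYi : ∀ i, ∫ ω, (Y i ω)^2 ∂P = (c i)^2 + δ^2 := by
    intro i
    rw [hYexpand i]
    have h1 : Integrable (fun ω => (c i)^2 + 2*(c i)*δ * ε i ω) P :=
      (integrable_const _).add ((hεint i).const_mul _)
    have h2 : Integrable (fun ω => δ^2 * (ε i ω)^2) P := (hεsqint i).const_mul _
    have h3 : Integrable (fun _ : Ω => (c i)^2) P := integrable_const _
    have h4 : Integrable (fun ω => 2*(c i)*δ * ε i ω) P := (hεint i).const_mul _
    rw [integral_add h1 h2, integral_add h3 h4,
      integral_const, integral_const_mul, integral_const_mul, hmean i, hsqmean i]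
    simp
  have hE : ∫ ω, residSq D Y m ω ∂P = ∑ i ∈ I, ((c i)^2 + δ^2) := by
    have h1 : ∫ ω, residSq D Y m ω ∂P = ∑ i ∈ I, ∫ ω, (Y i ω)^2 ∂P := by
      simp only [residSq, ← hI]
      exact integral_finset_sum I fun i _ => hYint i
    rw [h1]
    exact Finset.sum_congr rfl fun i _ => hEYi i
  -- κ < E
  have hEκ : κ < ∫ ω, residSq D Y m ω ∂P := by
    by_contra hcon
    push_neg at hcon
    have hfloor : ⌊(m:ℝ)⌋₊ = m := Nat.floor_natCast m
    have heq : ∀ ω, residSqT D Y (m:ℝ) ω = residSq D Y m ω := by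
      intro ω
      simp only [residSqT, residSq, hfloor, sub_self, Real.sqrt_zero, sub_zero, one_pow, one_mul]
      have hsplit : Finset.Icc (m+1) D = insert (m+1) (Finset.Icc (m+2) D) := by
        ext j
        simp only [Finset.mem_Icc, Finset.mem_insert]
        omega
      rw [hsplit, Finset.sum_insert (by simp [Finset.mem_Icc])]
    have hmem : (m:ℝ) ∈ {t : ℝ | (m0 : ℝ) ≤ t
        ∧ ∫ ω, residSqT D Y t ω ∂P
            ≤ κ - 2 * (Real.sqrt (t - ⌊t⌋₊) - (t - ⌊t⌋₊)) * δ ^ 2} := by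
      refine ⟨by exact_mod_cast hm0m, ?_⟩
      rw [integral_congr_ae (ae_of_all _ heq), hfloor, sub_self, Real.sqrt_zero]
      simpa using hcon
    have hbdd : BddBelow {t : ℝ | (m0 : ℝ) ≤ t
        ∧ ∫ ω, residSqT D Y t ω ∂P
            ≤ κ - 2 * (Real.sqrt (t - ⌊t⌋₊) - (t - ⌊t⌋₊)) * δ ^ 2} :=
      ⟨(m0:ℝ), fun t ht => ht.1⟩
    have hle := csInf_le hbdd hmem
    rw [← htstar] at hle
    exact absurd hmt (not_lt.mpr hle)
  set E : ℝ := ∫ ω, residSq D Y m ω ∂P with hEdef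
  set a : ℝ := E - κ with hadef
  have ha : 0 < a := by simp only [hadef]; linarith
  -- the two families
  set Xc : ℕ → Ω → ℝ := fun i ω => 1 - (ε i ω)^2 with hXc
  set Xl : ℕ → Ω → ℝ := fun i ω => (c i) * ε i ω with hXl
  have hXcindep : iIndepFun Xc P :=
    hεindep.comp (fun _ x => 1 - x^2) (fun _ => (measurable_id.pow_const 2).const_sub 1)
  have hXlindep : iIndepFun Xl P :=
    hεindep.comp (fun i x => c i * x) (fun i => measurable_id.const_mul (c i))
  have hXcmeas : ∀ i, Measurable (Xc i) := fun i => ((hεmeas i).pow_const 2).const_sub 1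
  have hXlmeas : ∀ i, Measurable (Xl i) := fun i => (hεmeas i).const_mul _
  -- pointwise decomposition
  have hdecomp : ∀ ω, E - residSq D Y m ω
      = δ^2 * (∑ i ∈ I, Xc i) ω - 2*δ*(∑ i ∈ I, Xl i) ω := by
    intro ω
    rw [hE]
    simp only [Finset.sum_apply, residSq, ← hI, hXc, hXl]
    rw [← Finset.sum_sub_distrib, Finset.mul_sum, Finset.mul_sum, ← Finset.sum_sub_distrib]
    refine Finset.sum_congr rfl fun i _ => ?_
    rw [hY]
    simp only [hc]
    ring
  -- event inclusion
  have hsub : {ω | residSq D Y m ω ≤ κ}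
      ⊆ {ω | a/(2*δ^2) ≤ (∑ i ∈ I, Xc i) ω} ∪ {ω | (∑ i ∈ I, Xl i) ω ≤ -(a/(4*δ))} := by
    intro ω hω
    simp only [Set.mem_setOf_eq] at hω
    by_contra hcon
    simp only [Set.mem_union, Set.mem_setOf_eq, not_or, not_le] at hcon
    obtain ⟨h1, h2⟩ := hcon
    have hd := hdecomp ω
    have hδ2 : (0:ℝ) < δ^2 := by positivity
    have e1 : δ^2 * (∑ i ∈ I, Xc i) ω < a/2 := by
      have := mul_lt_mul_of_pos_left h1 hδ2
      calc δ^2 * (∑ i ∈ I, Xc i) ω < δ^2 * (a/(2*δ^2)) := this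
        _ = a/2 := by field_simp
    have e2 : -(2*δ*(∑ i ∈ I, Xl i) ω) < a/2 := by
      have h3 : -(a/(4*δ)) < (∑ i ∈ I, Xl i) ω := h2
      have h4 : (0:ℝ) < 2*δ := by linarith
      have := mul_lt_mul_of_pos_left h3 h4
      calc -(2*δ*(∑ i ∈ I, Xl i) ω) < -(2*δ * (-(a/(4*δ)))) := by linarith
        _ = a/2 := by field_simp; ring
    have : E - residSq D Y m ω < a := by rw [hd]; linarith
    simp only [hadef] at this
    linarith
  -- union bound
  have hunion : (P {ω | residSq D Y m ω ≤ κ}).toReal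
      ≤ (P {ω | a/(2*δ^2) ≤ (∑ i ∈ I, Xc i) ω}).toReal
        + (P {ω | (∑ i ∈ I, Xl i) ω ≤ -(a/(4*δ))}).toReal := by
    have h1 := (measure_mono hsub).trans (measure_union_le (μ := P) _ _)
    have h2 := ENNReal.toReal_mono (by finiteness) h1
    rwa [ENNReal.toReal_add (by finiteness) (by finiteness)] at h2
  -- Chernoff for chi part
  set s1 : ℝ := a/(4*δ^2*n) with hs1def
  have hs1 : 0 < s1 := by
    apply div_pos ha
    positivity
  have hXcint : ∀ i ∈ I, Integrable (fun ω => rexp (s1 * Xc i ω)) P := by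
    intro i _
    have hf : Integrable (fun x : ℝ => rexp (s1 * (1 - x^2))) γ := by
      have := (integrable_exp_sq_gaussianReal hs1.le).const_mul (rexp s1)
      refine this.congr (ae_of_all _ fun x => ?_)
      show rexp s1 * rexp (-(s1 * x^2)) = rexp (s1 * (1 - x^2))
      rw [← Real.exp_add]
      congr 1
      ring
    exact htransInt i (fun x => rexp (s1 * (1 - x^2))) (((by fun_prop : Continuous fun x : ℝ => s1 * (1 - x^2)).rexp).aestronglyMeasurable) hf
  have hmgfc : ∀ i, mgf (Xc i) P s1 = rexp s1 * (Real.sqrt (1 + 2*s1))⁻¹ := by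
    intro i
    have h := htrans i (fun x => rexp (s1 * (1 - x^2))) (((by fun_prop : Continuous fun x : ℝ => s1 * (1 - x^2)).rexp).aestronglyMeasurable)
    have h2 : ∫ x, rexp (s1 * (1 - x^2)) ∂γ = rexp s1 * (Real.sqrt (1 + 2*s1))⁻¹ := by
      have h3 : (fun x : ℝ => rexp (s1 * (1 - x^2)))
          = fun x : ℝ => rexp s1 * rexp (-(s1 * x^2)) := by
        funext x
        rw [← Real.exp_add]
        congr 1
        ring
      rw [h3, integral_const_mul, integral_exp_sq_gaussianReal hs1.le]
    rw [mgf]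
    simp only [hXc]
    rw [h, h2]
  have hchern1 : (P {ω | a/(2*δ^2) ≤ (∑ i ∈ I, Xc i) ω}).toReal
      ≤ rexp (-(a^2) / (16 * δ^4 * n)) := by
    have hint := hXcindep.integrable_exp_mul_sum hXcmeas hXcint
    have h1 := measure_ge_le_exp_mul_mgf (μ := P) (X := ∑ i ∈ I, Xc i) (a/(2*δ^2)) hs1.le hint
    have h2 : mgf (∑ i ∈ I, Xc i) P s1 ≤ rexp (n * s1^2) := by
      rw [hXcindep.mgf_sum hXcmeas I]
      have h3 : ∏ i ∈ I, mgf (Xc i) P s1 = (rexp s1 * (Real.sqrt (1 + 2*s1))⁻¹) ^ I.card := by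
        rw [Finset.prod_congr rfl fun i _ => hmgfc i, Finset.prod_const]
      rw [h3]
      calc (rexp s1 * (Real.sqrt (1 + 2*s1))⁻¹) ^ I.card ≤ (rexp (s1^2)) ^ I.card := by
            refine pow_le_pow_left₀ (by positivity) (chi_mgf_bound hs1.le) _
        _ = rexp ((I.card : ℝ) * s1^2) := by
            rw [← Real.exp_nat_mul]
        _ = rexp (n * s1^2) := by rw [hcard]
    calc (P {ω | a/(2*δ^2) ≤ (∑ i ∈ I, Xc i) ω}).toReal
        ≤ rexp (-s1 * (a/(2*δ^2))) * mgf (∑ i ∈ I, Xc i) P s1 := h1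
      _ ≤ rexp (-s1 * (a/(2*δ^2))) * rexp (n * s1^2) :=
          mul_le_mul_of_nonneg_left h2 (Real.exp_pos _).le
      _ = rexp (-s1 * (a/(2*δ^2)) + n * s1^2) := by rw [← Real.exp_add]
      _ = rexp (-(a^2) / (16 * δ^4 * n)) := by
          congr 1
          simp only [hs1def]
          field_simp
          ring
  -- Chernoff for linear part
  set B2 : ℝ := ∑ i ∈ I, (c i)^2 with hB2
  have hB2nonneg : 0 ≤ B2 := Finset.sum_nonneg fun i _ => sq_nonneg _
  have hchern2 : (P {ω | (∑ i ∈ I, Xl i) ω ≤ -(a/(4*δ))}).toReal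
      ≤ rexp (-(a^2) / (32 * δ^2 * B2)) := by
    rcases eq_or_lt_of_le hB2nonneg with hB0 | hBpos
    · have : 32 * δ^2 * B2 = 0 := by rw [← hB0]; ring
      rw [this, div_zero, Real.exp_zero]
      calc (P {ω | (∑ i ∈ I, Xl i) ω ≤ -(a/(4*δ))}).toReal
          ≤ (P Set.univ).toReal := ENNReal.toReal_mono (by finiteness)
            (measure_mono (Set.subset_univ _))
        _ = 1 := by simp
    · set s2 : ℝ := -(a/(4*δ*B2)) with hs2def
      have hs2 : s2 ≤ 0 := by
        simp only [hs2def, neg_nonpos]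
        positivity
      have hXlint : ∀ i ∈ I, Integrable (fun ω => rexp (s2 * Xl i ω)) P := by
        intro i _
        have hf : Integrable (fun x : ℝ => rexp (s2 * (c i * x))) γ := by
          have h0 := integrable_exp_lin_gaussianReal (s2 * c i)
          simpa [mul_assoc] using h0
        exact htransInt i (fun x => rexp (s2 * (c i * x))) (((by fun_prop : Continuous fun x : ℝ => s2 * (c i * x)).rexp).aestronglyMeasurable) hf
      have hmgfl : ∀ i, mgf (Xl i) P s2 = rexp ((s2 * c i)^2/2) := by
        intro i
        have h := htrans i (fun x => rexp (s2 * (c i * x))) (((by fun_prop : Continuous fun x : ℝ => s2 * (c i * x)).rexp).aestronglyMeasurable)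
        have h2 : ∫ x, rexp (s2 * (c i * x)) ∂γ = rexp ((s2 * c i)^2/2) := by
          have h3 : (fun x : ℝ => rexp (s2 * (c i * x)))
              = fun x : ℝ => rexp ((s2 * c i) * x) := by
            funext x; simp only [hc]; ring_nf
          rw [h3, integral_exp_lin_gaussianReal]
        rw [mgf]
        simp only [hXl]
        rw [h, h2]
      have hint := hXlindep.integrable_exp_mul_sum hXlmeas hXlint
      have h1 := measure_le_le_exp_mul_mgf (μ := P) (X := ∑ i ∈ I, Xl i) (-(a/(4*δ))) hs2 hint
      have h2 : mgf (∑ i ∈ I, Xl i) P s2 = rexp (s2^2/2 * B2) := by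
        rw [hXlindep.mgf_sum hXlmeas I, Finset.prod_congr rfl fun i _ => hmgfl i,
          ← Real.exp_sum]
        congr 1
        rw [hB2, Finset.mul_sum]
        exact Finset.sum_congr rfl fun i _ => by ring
      calc (P {ω | (∑ i ∈ I, Xl i) ω ≤ -(a/(4*δ))}).toReal
          ≤ rexp (-s2 * (-(a/(4*δ)))) * mgf (∑ i ∈ I, Xl i) P s2 := h1
        _ = rexp (-s2 * (-(a/(4*δ))) + s2^2/2 * B2) := by rw [h2, ← Real.exp_add]
        _ = rexp (-(a^2) / (32 * δ^2 * B2)) := by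
            congr 1
            simp only [hs2def]
            field_simp
            ring
  -- combine
  have hgoal1 : -((∫ ω, residSq D Y m ω ∂P) - κ)^2 / (16 * δ^4 * ((D:ℝ) - m))
      = -(a^2) / (16 * δ^4 * n) := by rw [hadef, hEdef, hnd]
  have hgoal2 : -((∫ ω, residSq D Y m ω ∂P) - κ)^2
        / (32 * δ^2 * ∑ i ∈ Finset.Icc (m + 1) D, (lam i * μ i) ^ 2)
      = -(a^2) / (32 * δ^2 * B2) := by rw [hadef, hEdef, hB2, hI, hc]
  rw [hgoal1, hgoal2]
  calc (P {ω | residSq D Y m ω ≤ κ}).toReal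
      ≤ (P {ω | a/(2*δ^2) ≤ (∑ i ∈ I, Xc i) ω}).toReal
        + (P {ω | (∑ i ∈ I, Xl i) ω ≤ -(a/(4*δ))}).toReal := hunion
    _ ≤ rexp (-(a^2) / (16 * δ^4 * n)) + rexp (-(a^2) / (32 * δ^2 * B2)) :=
        add_le_add hchern1 hchern2
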